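/- Let S be a cancellative commutative semitopological semigroup with open shifts and let τ be the topology on the group of fractions ⟨S⟩ generated by the sets g·ι(x)⁻¹ι(V) for g ∈ ⟨S⟩, a fixed x ∈ S and V an open neighborhood of x in S (which makes (⟨S⟩, τ) a semitopological group containing S as an open subsemigroup). If S is Hausdorff, then (⟨S⟩, τ) is Hausdorff. -/

import Mathlib

/-- The topology on the group of fractions `G = ⟨S⟩` generated by the sets
`g · ι(x)⁻¹ · ι(V)`, for `g ∈ G`, a fixed `x ∈ S`, and `V` an open neighborhood
of `x` in `S`. -/
def fractionGroupTopology {S : Type*} [Mul S] [TopologicalSpace S] {G : Type*} [CommGroup G]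
    (ι : S →ₙ* G) (x : S) : TopologicalSpace G :=
  TopologicalSpace.generateFrom
    {T : Set G | ∃ (g : G) (V : Set S), IsOpen V ∧ x ∈ V ∧
      T = (fun s : S => g * (ι x)⁻¹ * ι s) '' V}

/-- Let `S` be a cancellative commutative semitopological semigroup with open
shifts, `G` its group of fractions, and `τ` the topology on `G` generated by the sets
`g·ι(x)⁻¹·ι(V)`. If `S` is Hausdorff then `(G, τ)` is Hausdorff. -/
theorem fractionGroup_t2Space_of_t2Space
    {S : Type*} [CommSemigroup S] [IsCancelMul S] [TopologicalSpace S]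
    (hc : ∀ a : S, Continuous fun s : S => a * s)
    (ho : ∀ a : S, IsOpenMap fun s : S => a * s)
    {G : Type*} [CommGroup G] (ι : S →ₙ* G)
    (hinj : Function.Injective ι)
    (hgen : ∀ g : G, ∃ a b : S, g = ι a * (ι b)⁻¹)
    (x : S)
    (ht2 : T2Space S) :
    @T2Space G (fractionGroupTopology ι x) := by
  letI τ := fractionGroupTopology ι x
  constructor
  intro g h hgh
  obtain ⟨a, b, hab⟩ := hgen (g⁻¹ * h)
  have hane : a ≠ b := by
    rintro rfl
    apply hgh
    have : g⁻¹ * h = 1 := by rw [hab, mul_inv_cancel]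
    have h1 : g⁻¹ * h = g⁻¹ * g := by rw [this]; group
    exact (mul_left_cancel h1).symm
  have hbx : b * x ≠ a * x := fun he => hane (mul_right_cancel he).symm
  obtain ⟨U₁, U₂, hU₁, hU₂, hbU, haU, hdis⟩ := t2_separation hbx
  set V : Set S := (fun s => b * s) ⁻¹' U₁ with hV
  set W : Set S := (fun s => a * s) ⁻¹' U₂ with hW
  have hVopen : IsOpen V := hU₁.preimage (hc b)
  have hWopen : IsOpen W := hU₂.preimage (hc a)
  have hxV : x ∈ V := hbU
  have hxW : x ∈ W := haU
  refine ⟨(fun s : S => g * (ι x)⁻¹ * ι s) '' V, (fun s : S => h * (ι x)⁻¹ * ι s) '' W,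
    ?_, ?_, ⟨x, hxV, by group⟩, ⟨x, hxW, by group⟩, ?_⟩
  · exact TopologicalSpace.isOpen_generateFrom_of_mem ⟨g, V, hVopen, hxV, rfl⟩
  · exact TopologicalSpace.isOpen_generateFrom_of_mem ⟨h, W, hWopen, hxW, rfl⟩
  · rw [Set.disjoint_left]
    rintro z ⟨v, hv, rfl⟩ ⟨w, hw, hzw⟩
    have he : ι v * ι b = ι w * ι a := by
      have h1 : g * ι v = h * ι w := by
        have := hzw; field_simp at this
        rw [mul_right_comm g, mul_right_comm h] at this
        exact mul_right_cancel this.symm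
      have hh : h = g * (ι a * (ι b)⁻¹) := by rw [← hab]; group
      have h3 : g * (ι v * ι b) = g * (ι w * ι a) := by
        rw [← mul_assoc, h1, hh]
        simp [mul_comm, mul_left_comm, mul_assoc]
      exact mul_left_cancel h3
    have hvb : v * b = w * a := hinj (by rw [map_mul, map_mul, he])
    have hmem : b * v ∈ U₁ := hv
    have h2 : a * w ∈ U₂ := hw
    rw [mul_comm b v, hvb, mul_comm w a] at hmem
    exact Set.disjoint_left.mp hdis hmem h2
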